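/- For all integers n ≥ 2 and α ≥ 1, Z_{n+α} ≥ Z_{α+1} · Z_n. -/

import Mathlib

/-- `Z n` : the number of non-decreasing vectors `(ℓ₁,…,ℓ_n)` of positive integers
satisfying `Σ_{j=1}^n 2^{-ℓⱼ} = 1`. -/
noncomputable def Z (n : ℕ) : ℕ :=
  Nat.card {f : Fin n → ℕ // Monotone f ∧ (∀ j, 1 ≤ f j) ∧
    ∑ j, ((2 : ℚ) ^ f j)⁻¹ = 1}

open Finset

/-- Tail sums are positive and bounded. -/
lemma tail_facts (m : ℕ) (f : Fin m → ℕ) (hmono : Monotone f)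
    (hsum : ∑ j, ((2:ℚ) ^ f j)⁻¹ = 1) (j : Fin m) :
    ((2:ℚ) ^ f j)⁻¹ ≤ ∑ i ∈ univ.filter (fun i => j ≤ i), ((2:ℚ) ^ f i)⁻¹ ∧
    ∑ i ∈ univ.filter (fun i => j ≤ i), ((2:ℚ) ^ f i)⁻¹ ≤ (m : ℚ) * ((2:ℚ) ^ f j)⁻¹ := by
  constructor
  · apply Finset.single_le_sum (f := fun i => ((2:ℚ) ^ f i)⁻¹)
    · intro i _; positivity
    · simp
  · calc ∑ i ∈ univ.filter (fun i => j ≤ i), ((2:ℚ) ^ f i)⁻¹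
        ≤ (univ.filter (fun i => j ≤ i)).card • ((2:ℚ) ^ f j)⁻¹ := by
          apply Finset.sum_le_card_nsmul
          intro i hi
          simp only [mem_filter] at hi
          have : f j ≤ f i := hmono hi.2
          have h1 : (2:ℚ) ^ f j ≤ 2 ^ f i := by
            apply pow_le_pow_right₀ (by norm_num) this
          exact inv_anti₀ (by positivity) h1
      _ ≤ (m : ℚ) * ((2:ℚ) ^ f j)⁻¹ := by
          rw [nsmul_eq_mul]
          apply mul_le_mul_of_nonneg_right _ (by positivity)
          have : (univ.filter (fun i => j ≤ i)).card ≤ m := by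
            refine le_trans (Finset.card_filter_le _ _) (by simp)
          exact_mod_cast this

lemma head_tail (m : ℕ) (f : Fin m → ℕ)
    (hsum : ∑ j, ((2:ℚ) ^ f j)⁻¹ = 1) (j : Fin m) :
    ∑ i ∈ univ.filter (fun i => ¬ j ≤ i), ((2:ℚ) ^ f i)⁻¹
      = 1 - ∑ i ∈ univ.filter (fun i => j ≤ i), ((2:ℚ) ^ f i)⁻¹ := by
  have := Finset.sum_filter_add_sum_filter_not (univ : Finset (Fin m))
    (fun i => j ≤ i) (fun i => ((2:ℚ) ^ f i)⁻¹)
  rw [hsum] at this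
  linarith

/-- key step: if `f i ≤ f p` for all `i < j`, then `2^(f j) ≤ m * 2^(f p)`. -/
lemma key_step (m : ℕ) (f : Fin m → ℕ) (hmono : Monotone f)
    (hsum : ∑ j, ((2:ℚ) ^ f j)⁻¹ = 1) (j p : Fin m)
    (hp : ∀ i : Fin m, i < j → f i ≤ f p) :
    (2:ℚ) ^ f j ≤ (m:ℚ) * 2 ^ f p := by
  set T : ℚ := ∑ i ∈ univ.filter (fun i => j ≤ i), ((2:ℚ) ^ f i)⁻¹ with hT
  obtain ⟨hT1, hT2⟩ := tail_facts m f hmono hsum j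
  have hht := head_tail m f hsum j
  -- integrality : T * 2^(f p) is an integer
  have hint : T * 2 ^ f p
      = ((2 ^ f p - ∑ i ∈ univ.filter (fun i => ¬ j ≤ i), (2:ℤ) ^ (f p - f i) : ℤ) : ℚ) := by
    have h1 : T = 1 - ∑ i ∈ univ.filter (fun i => ¬ j ≤ i), ((2:ℚ) ^ f i)⁻¹ := by
      rw [hht]; ring
    rw [h1, sub_mul, one_mul, Finset.sum_mul]
    push_cast
    congr 1
    apply Finset.sum_congr rfl
    intro i hi
    simp only [mem_filter, not_le] at hi
    have hle : f i ≤ f p := hp i hi.2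
    have : (2:ℚ) ^ (f p - f i) * 2 ^ f i = 2 ^ f p := by
      rw [← pow_add]; congr 1; omega
    field_simp
    linarith [this]
  have hTpos : 0 < T := lt_of_lt_of_le (by positivity) hT1
  have hApos : (0:ℚ) < ((2 ^ f p - ∑ i ∈ univ.filter (fun i => ¬ j ≤ i), (2:ℤ) ^ (f p - f i) : ℤ) : ℚ) := by
    rw [← hint]; positivity
  have hA1 : (1:ℚ) ≤ ((2 ^ f p - ∑ i ∈ univ.filter (fun i => ¬ j ≤ i), (2:ℤ) ^ (f p - f i) : ℤ) : ℚ) := by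
    have : (0:ℤ) < 2 ^ f p - ∑ i ∈ univ.filter (fun i => ¬ j ≤ i), (2:ℤ) ^ (f p - f i) := by
      exact_mod_cast hApos
    exact_mod_cast this
  have h2 : (1:ℚ) ≤ T * 2 ^ f p := by rw [hint]; exact hA1
  -- combine with hT2
  have h3 : (1:ℚ) ≤ ((m:ℚ) * ((2:ℚ) ^ f j)⁻¹) * 2 ^ f p := by
    apply le_trans h2
    apply mul_le_mul_of_nonneg_right hT2 (by positivity)
  have hpj : (0:ℚ) < 2 ^ f j := by positivity
  calc (2:ℚ) ^ f j = ((2:ℚ)^ f j) * 1 := by ring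
    _ ≤ ((2:ℚ)^ f j) * (((m:ℚ) * ((2:ℚ) ^ f j)⁻¹) * 2 ^ f p) :=
        mul_le_mul_of_nonneg_left h3 (by positivity)
    _ = ((2:ℚ)^ f j * ((2:ℚ) ^ f j)⁻¹) * ((m:ℚ) * 2 ^ f p) := by ring
    _ = (m:ℚ) * 2 ^ f p := by rw [mul_inv_cancel₀ (by positivity)]; ring

lemma pow_le_of (m a b : ℕ) (h : (2:ℚ) ^ a ≤ (m:ℚ) * 2 ^ b) : a ≤ b + m := by
  have hm : (m:ℚ) ≤ 2 ^ m := by exact_mod_cast (Nat.lt_two_pow_self (n := m)).le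
  have : (2:ℚ) ^ a ≤ 2 ^ (b + m) := by
    rw [pow_add]
    calc (2:ℚ) ^ a ≤ (m:ℚ) * 2 ^ b := h
      _ ≤ 2 ^ m * 2 ^ b := mul_le_mul_of_nonneg_right hm (by positivity)
      _ = 2 ^ b * 2 ^ m := by ring
  exact (pow_le_pow_iff_right₀ (by norm_num)).mp this

lemma base_bound (m : ℕ) (f : Fin m → ℕ) (hmono : Monotone f)
    (hsum : ∑ j, ((2:ℚ) ^ f j)⁻¹ = 1) (j : Fin m) (hj : j.val = 0) :
    (2:ℚ) ^ f j ≤ (m:ℚ) := by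
  have hT2 := (tail_facts m f hmono hsum j).2
  have huniv : univ.filter (fun i => j ≤ i) = univ := by
    ext i
    simp [Fin.le_iff_val_le_val, hj]
  rw [huniv, hsum] at hT2
  calc (2:ℚ) ^ f j = ((2:ℚ)^ f j) * 1 := by ring
    _ ≤ ((2:ℚ)^ f j) * ((m:ℚ) * ((2:ℚ) ^ f j)⁻¹) := mul_le_mul_of_nonneg_left hT2 (by positivity)
    _ = ((2:ℚ)^ f j * ((2:ℚ) ^ f j)⁻¹) * (m:ℚ) := by ring
    _ = (m:ℚ) := by rw [mul_inv_cancel₀ (by positivity)]; ring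

/-- Every entry of a Kraft-equality vector is bounded. -/
lemma entry_bound (m : ℕ) (f : Fin m → ℕ) (hmono : Monotone f)
    (hsum : ∑ j, ((2:ℚ) ^ f j)⁻¹ = 1) (j : Fin m) : f j ≤ (j.val + 1) * m := by
  induction' hj : j.val with k ih generalizing j
  · have h := base_bound m f hmono hsum j hj
    have : f j ≤ 0 + m := pow_le_of m (f j) 0 (by simpa using h)
    omega
  · have hk : k < m := by have := j.isLt; omega
    set p : Fin m := ⟨k, hk⟩ with hpdef
    have hp : ∀ i : Fin m, i < j → f i ≤ f p := by
      intro i hi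
      apply hmono
      have := Fin.lt_iff_val_lt_val.mp hi
      exact Fin.le_iff_val_le_val.mpr (by simp [hpdef]; omega)
    have h1 := key_step m f hmono hsum j p hp
    have h2 : f j ≤ f p + m := pow_le_of m (f j) (f p) h1
    have h3 : f p ≤ (k + 1) * m := ih p rfl
    calc f j ≤ f p + m := h2
      _ ≤ (k + 1) * m + m := by omega
      _ = (k + 1 + 1) * m := by ring

/-- The set of Kraft-equality vectors is finite. -/
lemma finiteS (m : ℕ) : Finite {f : Fin m → ℕ // Monotone f ∧ (∀ j, 1 ≤ f j) ∧
    ∑ j, ((2 : ℚ) ^ f j)⁻¹ = 1} := by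
  apply Finite.of_injective (β := Fin m → Fin ((m+1)*m+1))
    (fun F => fun j => ⟨F.1 j, by
      have h1 := entry_bound m F.1 F.2.1 F.2.2.2 j
      have h2 : (j.val + 1) * m ≤ (m+1) * m := Nat.mul_le_mul_right _ (by have := j.isLt; omega)
      omega⟩)
  intro F G h
  apply Subtype.ext
  funext j
  have := congrFun h j
  simpa using this

/-- Combination of two Kraft vectors: graft `g` onto the last leaf of `f`. -/
def combine (n α : ℕ) (hn : 2 ≤ n) (f : Fin (α+1) → ℕ) (g : Fin n → ℕ) : ℕ → ℕ :=
  fun v => if v < α then f ⟨min v α, by omega⟩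
    else g ⟨min (v - α) (n-1), by omega⟩ + f ⟨α, by omega⟩

lemma combine_mono (n α : ℕ) (hn : 2 ≤ n) (f : Fin (α+1) → ℕ) (g : Fin n → ℕ)
    (hf : Monotone f) (hg : Monotone g) :
    Monotone (fun i : Fin (n+α) => combine n α hn f g i.val) := by
  intro i j hij
  have hij' : (i:ℕ) ≤ (j:ℕ) := hij
  simp only [combine]
  split_ifs with h1 h2 h2
  · exact hf (by simp only [Fin.mk_le_mk]; omega)
  · calc f ⟨min i.val α, by omega⟩ ≤ f ⟨α, by omega⟩ := hf (by simp only [Fin.mk_le_mk]; omega)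
      _ ≤ _ := Nat.le_add_left _ _
  · omega
  · have : g ⟨min (i.val - α) (n-1), by omega⟩ ≤ g ⟨min (j.val - α) (n-1), by omega⟩ :=
      hg (by simp only [Fin.mk_le_mk]; omega)
    omega

lemma combine_pos (n α : ℕ) (hn : 2 ≤ n) (f : Fin (α+1) → ℕ) (g : Fin n → ℕ)
    (hf : ∀ j, 1 ≤ f j) (hg : ∀ j, 1 ≤ g j) (v : ℕ) : 1 ≤ combine n α hn f g v := by
  simp only [combine]
  split_ifs with h1
  · exact hf _
  · have := hg (⟨min (v - α) (n-1), by omega⟩ : Fin n); omega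

lemma combine_sum (n α : ℕ) (hn : 2 ≤ n) (hα : 1 ≤ α) (f : Fin (α+1) → ℕ) (g : Fin n → ℕ)
    (hfs : ∑ j, ((2:ℚ) ^ f j)⁻¹ = 1) (hgs : ∑ j, ((2:ℚ) ^ g j)⁻¹ = 1) :
    ∑ i : Fin (n+α), ((2:ℚ) ^ combine n α hn f g i.val)⁻¹ = 1 := by
  have hfq : ∑ v ∈ range (α+1), ((2:ℚ) ^ f ⟨min v α, by omega⟩)⁻¹ = 1 := by
    rw [← Fin.sum_univ_eq_sum_range (fun v => ((2:ℚ) ^ f ⟨min v α, by omega⟩)⁻¹) (α+1), ← hfs]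
    apply Finset.sum_congr rfl
    intro i _
    have h : (⟨(i:ℕ) ⊓ α, by omega⟩ : Fin (α+1)) = i := by
      apply Fin.ext
      show (i:ℕ) ⊓ α = (i:ℕ)
      have := i.isLt
      omega
    rw [h]
  have hgq : ∑ v ∈ range n, ((2:ℚ) ^ g ⟨min v (n-1), by omega⟩)⁻¹ = 1 := by
    rw [← Fin.sum_univ_eq_sum_range (fun v => ((2:ℚ) ^ g ⟨min v (n-1), by omega⟩)⁻¹) n, ← hgs]
    apply Finset.sum_congr rfl
    intro i _
    have h : (⟨(i:ℕ) ⊓ (n-1), by omega⟩ : Fin n) = i := by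
      apply Fin.ext
      show (i:ℕ) ⊓ (n-1) = (i:ℕ)
      have := i.isLt
      omega
    rw [h]
  rw [Fin.sum_univ_eq_sum_range (fun v => ((2:ℚ) ^ combine n α hn f g v)⁻¹) (n+α)]
  rw [show n + α = α + n by omega, Finset.sum_range_add]
  have h1 : ∑ v ∈ range α, ((2:ℚ) ^ combine n α hn f g v)⁻¹
      = ∑ v ∈ range α, ((2:ℚ) ^ f ⟨min v α, by omega⟩)⁻¹ := by
    apply Finset.sum_congr rfl
    intro v hv
    simp only [mem_range] at hv
    simp only [combine, if_pos hv]
  have h2 : ∑ v ∈ range n, ((2:ℚ) ^ combine n α hn f g (α + v))⁻¹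
      = ((2:ℚ) ^ f ⟨α, by omega⟩)⁻¹ * ∑ v ∈ range n, ((2:ℚ) ^ g ⟨min v (n-1), by omega⟩)⁻¹ := by
    rw [Finset.mul_sum]
    apply Finset.sum_congr rfl
    intro v hv
    simp only [mem_range] at hv
    have hge : ¬ (α + v < α) := by omega
    simp only [combine, if_neg hge]
    have hidx : g ⟨(α + v - α) ⊓ (n-1), by omega⟩ = g ⟨v ⊓ (n-1), by omega⟩ := by
      congr 1
      apply Fin.ext
      show (α + v - α) ⊓ (n-1) = v ⊓ (n-1)
      omega
    rw [hidx, pow_add, mul_inv]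
    ring
  rw [h1, h2, hgq, mul_one]
  rw [Finset.sum_range_succ] at hfq
  have h3 : (⟨α ⊓ α, by omega⟩ : Fin (α+1)) = ⟨α, by omega⟩ := by
    apply Fin.ext
    show α ⊓ α = α
    omega
  rw [h3] at hfq
  exact hfq

lemma fq_sum (α : ℕ) (f : Fin (α+1) → ℕ) (hfs : ∑ j, ((2:ℚ) ^ f j)⁻¹ = 1) :
    ∑ v ∈ range (α+1), ((2:ℚ) ^ f ⟨min v α, by omega⟩)⁻¹ = 1 := by
  rw [← Fin.sum_univ_eq_sum_range (fun v => ((2:ℚ) ^ f ⟨min v α, by omega⟩)⁻¹) (α+1), ← hfs]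
  apply Finset.sum_congr rfl
  intro i _
  have h : (⟨(i:ℕ) ⊓ α, by omega⟩ : Fin (α+1)) = i := by
    apply Fin.ext
    show (i:ℕ) ⊓ α = (i:ℕ)
    have := i.isLt
    omega
  rw [h]

lemma combine_inj (n α : ℕ) (hn : 2 ≤ n) (hα : 1 ≤ α)
    (f f' : Fin (α+1) → ℕ) (g g' : Fin n → ℕ)
    (hfs : ∑ j, ((2:ℚ) ^ f j)⁻¹ = 1) (hfs' : ∑ j, ((2:ℚ) ^ f' j)⁻¹ = 1)
    (heq : ∀ v : ℕ, v < n + α → combine n α hn f g v = combine n α hn f' g' v) :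
    f = f' ∧ g = g' := by
  -- f and f' agree below α
  have step1 : ∀ j : Fin (α+1), (j:ℕ) < α → f j = f' j := by
    intro j hj
    have h := heq j.val (by omega)
    simp only [combine, if_pos hj] at h
    have hmk : (⟨(j:ℕ) ⊓ α, by omega⟩ : Fin (α+1)) = j := by
      apply Fin.ext
      show (j:ℕ) ⊓ α = (j:ℕ)
      omega
    rwa [hmk] at h
  -- last entries agree
  have hq := fq_sum α f hfs
  have hq' := fq_sum α f' hfs'
  rw [Finset.sum_range_succ] at hq hq'
  have hhead : ∑ x ∈ range α, ((2:ℚ) ^ f ⟨min x α, by omega⟩)⁻¹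
      = ∑ x ∈ range α, ((2:ℚ) ^ f' ⟨min x α, by omega⟩)⁻¹ := by
    apply Finset.sum_congr rfl
    intro x hx
    simp only [mem_range] at hx
    rw [step1 ⟨min x α, by omega⟩ (by show x ⊓ α < α; omega)]
  have htail : ((2:ℚ) ^ f ⟨min α α, by omega⟩)⁻¹ = ((2:ℚ) ^ f' ⟨min α α, by omega⟩)⁻¹ := by
    rw [hhead] at hq
    linarith
  have hlastnat : f ⟨min α α, by omega⟩ = f' ⟨min α α, by omega⟩ := by
    have h2 : (2:ℚ) ^ f ⟨min α α, by omega⟩ = 2 ^ f' ⟨min α α, by omega⟩ :=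
      inv_injective htail
    have h3 : (2:ℕ) ^ f ⟨min α α, by omega⟩ = 2 ^ f' ⟨min α α, by omega⟩ := by
      exact_mod_cast h2
    exact Nat.pow_right_injective le_rfl h3
  have hmkα : (⟨min α α, by omega⟩ : Fin (α+1)) = ⟨α, by omega⟩ := by
    apply Fin.ext
    show α ⊓ α = α
    omega
  rw [hmkα] at hlastnat
  have hff : f = f' := by
    funext j
    rcases Nat.lt_or_ge (j:ℕ) α with hj | hj
    · exact step1 j hj
    · have hjα : (j:ℕ) = α := by have := j.isLt; omega
      have : j = (⟨α, by omega⟩ : Fin (α+1)) := Fin.ext hjα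
      rw [this]
      exact hlastnat
  refine ⟨hff, ?_⟩
  funext k
  have h := heq (α + k.val) (by have := k.isLt; omega)
  have hge : ¬ (α + (k:ℕ) < α) := by omega
  simp only [combine, if_neg hge] at h
  have hmk : (⟨(α + (k:ℕ) - α) ⊓ (n-1), by omega⟩ : Fin n) = k := by
    apply Fin.ext
    show (α + (k:ℕ) - α) ⊓ (n-1) = (k:ℕ)
    have := k.isLt
    omega
  rw [hmk, hff] at h
  omega

theorem stmt14' (n α : ℕ) (hn : 2 ≤ n) (hα : 1 ≤ α) :
    Nat.card {f : Fin (α+1) → ℕ // Monotone f ∧ (∀ j, 1 ≤ f j) ∧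
      ∑ j, ((2 : ℚ) ^ f j)⁻¹ = 1} *
    Nat.card {f : Fin n → ℕ // Monotone f ∧ (∀ j, 1 ≤ f j) ∧
      ∑ j, ((2 : ℚ) ^ f j)⁻¹ = 1} ≤
    Nat.card {f : Fin (n+α) → ℕ // Monotone f ∧ (∀ j, 1 ≤ f j) ∧
      ∑ j, ((2 : ℚ) ^ f j)⁻¹ = 1} := by
  classical
  haveI := finiteS (n + α)
  rw [← Nat.card_prod]
  refine Nat.card_le_card_of_injective
    (fun P => ⟨fun i => combine n α hn P.1.1 P.2.1 i.val,
      combine_mono n α hn P.1.1 P.2.1 P.1.2.1 P.2.2.1,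
      fun j => combine_pos n α hn P.1.1 P.2.1 P.1.2.2.1 P.2.2.2.1 j.val,
      combine_sum n α hn hα P.1.1 P.2.1 P.1.2.2.2 P.2.2.2.2⟩) ?_
  rintro ⟨⟨f, hf⟩, ⟨g, hg⟩⟩ ⟨⟨f', hf'⟩, ⟨g', hg'⟩⟩ h
  simp only [Subtype.mk.injEq] at h
  obtain ⟨h1, h2⟩ := combine_inj n α hn hα f f' g g' hf.2.2 hf'.2.2 (fun v hv => by
    exact congrFun h (⟨v, hv⟩ : Fin (n+α)))
  simp [Prod.ext_iff, Subtype.ext_iff, h1, h2]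

/-- For all integers `n ≥ 2` and `α ≥ 1`,
`Z_{n+α} ≥ Z_{α+1} · Z_n`. -/
theorem stmt14 (n α : ℕ) (hn : 2 ≤ n) (hα : 1 ≤ α) :
    Z (α + 1) * Z n ≤ Z (n + α) := by
  simp only [Z]
  exact stmt14' n α hn hα
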